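/- Let G be a group such that Z(G) and G/Z(G) both have the Magnus property, and suppose that for every g ∈ G \ Z(G) the set { [g,w] : w ∈ G } contains ⟨g⟩^G ∩ Z(G). Then G has the Magnus property. -/

import Mathlib

def MagnusProperty (G : Type*) [Group G] : Prop :=
  ∀ g h : G, Subgroup.normalClosure {g} = Subgroup.normalClosure {h} →
    IsConj g h ∨ IsConj g h⁻¹

open Subgroup

private lemma nc_mem {G : Type*} [Group G] (g : G) :
    g ∈ Subgroup.normalClosure ({g} : Set G) := subset_normalClosure rfl

private lemma nc_conj {G : Type*} [Group G] (x g : G) :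
    Subgroup.normalClosure ({x * g * x⁻¹} : Set G)
      = Subgroup.normalClosure ({g} : Set G) := by
  apply le_antisymm
  · exact normalClosure_le_normal (Set.singleton_subset_iff.mpr
      ((normalClosure_normal).conj_mem g (nc_mem g) x))
  · refine normalClosure_le_normal (Set.singleton_subset_iff.mpr ?_)
    have := (normalClosure_normal (s := ({x * g * x⁻¹} : Set G))).conj_mem _
      (nc_mem (x * g * x⁻¹)) x⁻¹
    simpa [mul_assoc] using this

private lemma nc_inv {G : Type*} [Group G] (g : G) :
    Subgroup.normalClosure ({g⁻¹} : Set G) = Subgroup.normalClosure ({g} : Set G) := by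
  apply le_antisymm
  · exact normalClosure_le_normal (Set.singleton_subset_iff.mpr
      ((Subgroup.normalClosure ({g} : Set G)).inv_mem (nc_mem g)))
  · exact normalClosure_le_normal (Set.singleton_subset_iff.mpr
      (by simpa using (Subgroup.normalClosure ({g⁻¹} : Set G)).inv_mem (nc_mem g⁻¹)))

private lemma step {G : Type*} [Group G]
    (hcomm : ∀ g : G, g ∉ Subgroup.center G →
      ∀ z ∈ Subgroup.normalClosure ({g} : Set G) ⊓ Subgroup.center G,
        ∃ w : G, g⁻¹ * w⁻¹ * g * w = z)
    (g h : G) (hg : g ∉ center G)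
    (hnc : Subgroup.normalClosure ({g} : Set G) = Subgroup.normalClosure ({h} : Set G))
    (hc : IsConj (QuotientGroup.mk (s := center G) g) (QuotientGroup.mk h)) :
    IsConj g h := by
  obtain ⟨q, hq⟩ := isConj_iff.mp hc
  obtain ⟨x, rfl⟩ := QuotientGroup.mk_surjective q
  set g' := x * g * x⁻¹ with hg'
  have hπ : (QuotientGroup.mk (s := center G) g') = QuotientGroup.mk h := by
    rw [hg']
    rw [← hq]
    rfl
  have hzc : g'⁻¹ * h ∈ center G := (QuotientGroup.eq (s := center G)).mp hπ
  have hg'nc : Subgroup.normalClosure ({g'} : Set G)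
      = Subgroup.normalClosure ({h} : Set G) := by
    rw [hg', nc_conj, hnc]
  have hg'notZ : g' ∉ center G := by
    intro hmem
    exact hg (by
      have he : g = x⁻¹ * g' * x⁻¹⁻¹ := by simp [hg', mul_assoc]
      rw [he]
      exact Subgroup.Normal.conj_mem inferInstance g' hmem x⁻¹)
  have hznc : g'⁻¹ * h ∈ Subgroup.normalClosure ({g'} : Set G) :=
    (Subgroup.normalClosure ({g'} : Set G)).mul_mem
      ((Subgroup.normalClosure ({g'} : Set G)).inv_mem (nc_mem g'))
      (hg'nc ▸ nc_mem h)
  obtain ⟨w, hw⟩ := hcomm g' hg'notZ (g'⁻¹ * h) ⟨hznc, hzc⟩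
  have : w⁻¹ * g' * w = h := by
    have := congrArg (fun t => g' * t) hw
    simp only [← mul_assoc, mul_inv_cancel, one_mul] at this
    simpa [mul_assoc] using this
  have h1 : IsConj g' h := isConj_iff.mpr ⟨w⁻¹, by simpa [mul_assoc] using this⟩
  exact (isConj_iff.mpr ⟨x, rfl⟩ : IsConj g g').trans h1

private lemma center_subgroup_normal {G : Type*} [Group G]
    (K : Subgroup ↥(center G)) : K.Normal := by
  constructor
  intro n hn x
  have hcomm : (x : G) * n = n * x := Subgroup.mem_center_iff.mp n.2 x
  have : x * n * x⁻¹ = n := by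
    have : x * n = n * x := Subtype.ext hcomm
    rw [this, mul_assoc, mul_inv_cancel, mul_one]
  rwa [this]

private lemma zpowers_central_normal {G : Type*} [Group G] {g : G}
    (hg : g ∈ center G) : (Subgroup.zpowers g).Normal := by
  constructor
  intro n hn x
  have hn' : n ∈ center G := (Subgroup.zpowers_le.mpr hg) hn
  have : x * n * x⁻¹ = n := by
    rw [Subgroup.mem_center_iff.mp hn' x, mul_assoc, mul_inv_cancel, mul_one]
  rwa [this]

private lemma nc_central {G : Type*} [Group G] {g : G} (hg : g ∈ center G) :
    Subgroup.normalClosure ({g} : Set G) = Subgroup.zpowers g := by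
  haveI := zpowers_central_normal hg
  exact le_antisymm
    (normalClosure_le_normal (Set.singleton_subset_iff.mpr (Subgroup.mem_zpowers g)))
    (Subgroup.zpowers_le.mpr (nc_mem g))

theorem magnus_of_centre_and_quotient (G : Type*) [Group G]
    (hZ : MagnusProperty (Subgroup.center G))
    (hQ : MagnusProperty (G ⧸ Subgroup.center G))
    (hcomm : ∀ g : G, g ∉ Subgroup.center G →
      ∀ z ∈ Subgroup.normalClosure ({g} : Set G) ⊓ Subgroup.center G,
        ∃ w : G, g⁻¹ * w⁻¹ * g * w = z) :
    MagnusProperty G := by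
  intro g h hnc
  by_cases hg : g ∈ center G
  · -- both central
    have hh : h ∈ center G := by
      have : Subgroup.normalClosure ({g} : Set G) ≤ center G :=
        normalClosure_le_normal (Set.singleton_subset_iff.mpr hg)
      exact this (hnc ▸ nc_mem h)
    have hzp : Subgroup.zpowers g = Subgroup.zpowers h := by
      rw [← nc_central hg, ← nc_central hh, hnc]
    -- transfer to the center subgroup
    set gz : ↥(center G) := ⟨g, hg⟩
    set hz : ↥(center G) := ⟨h, hh⟩
    have key : Subgroup.normalClosure ({gz} : Set ↥(center G))
        = Subgroup.normalClosure ({hz} : Set ↥(center G)) := by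
      haveI := center_subgroup_normal (Subgroup.normalClosure ({gz} : Set ↥(center G)))
      haveI := center_subgroup_normal (Subgroup.normalClosure ({hz} : Set ↥(center G)))
      apply le_antisymm
      · refine normalClosure_le_normal (Set.singleton_subset_iff.mpr ?_)
        have : g ∈ Subgroup.zpowers h := hzp ▸ Subgroup.mem_zpowers g
        obtain ⟨k, hk⟩ := this
        have : hz ^ k = gz := Subtype.ext (by simpa using hk)
        exact this ▸ (Subgroup.normalClosure ({hz} : Set ↥(center G))).zpow_mem (nc_mem hz) k
      · refine normalClosure_le_normal (Set.singleton_subset_iff.mpr ?_)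
        have : h ∈ Subgroup.zpowers g := hzp ▸ Subgroup.mem_zpowers h
        obtain ⟨k, hk⟩ := this
        have : gz ^ k = hz := Subtype.ext (by simpa using hk)
        exact this ▸ (Subgroup.normalClosure ({gz} : Set ↥(center G))).zpow_mem (nc_mem gz) k
    rcases hZ gz hz key with hc | hc
    · obtain ⟨c, hc⟩ := isConj_iff.mp hc
      have heq : g = h := by simpa [gz, hz, ← Subgroup.mem_center_iff.mp c.2 g] using congrArg Subtype.val hc
      exact Or.inl (heq ▸ IsConj.refl g)
    · obtain ⟨c, hc⟩ := isConj_iff.mp hc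
      have heq : g = h⁻¹ := by simpa [gz, hz, ← Subgroup.mem_center_iff.mp c.2 g] using congrArg Subtype.val hc
      exact Or.inr (heq ▸ IsConj.refl g)
  · -- g not central
    have hh : h ∉ center G := by
      intro hh
      exact hg ((normalClosure_le_normal (Set.singleton_subset_iff.mpr hh) :
        Subgroup.normalClosure ({h} : Set G) ≤ center G) (hnc ▸ nc_mem g))
    have hQnc : Subgroup.normalClosure ({(QuotientGroup.mk (s := center G) g)} :
          Set (G ⧸ center G))
        = Subgroup.normalClosure ({(QuotientGroup.mk (s := center G) h)} :
          Set (G ⧸ center G)) := by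
      have h1 := Subgroup.map_normalClosure ({g} : Set G)
        (QuotientGroup.mk' (center G)) (QuotientGroup.mk'_surjective _)
      have h2 := Subgroup.map_normalClosure ({h} : Set G)
        (QuotientGroup.mk' (center G)) (QuotientGroup.mk'_surjective _)
      simp only [Set.image_singleton, QuotientGroup.mk'_apply] at h1 h2
      rw [← h1, ← h2, hnc]
    rcases hQ _ _ hQnc with hc | hc
    · exact Or.inl (step hcomm g h hg hnc hc)
    · refine Or.inr (step hcomm g h⁻¹ hg (by rw [hnc, nc_inv]) ?_)
      simpa using hc
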